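/- arXiv:2311.16611 — 2 statements merged into one kernel-verified Lean document; each statement's English description precedes it below -/
import Mathlib

section
/- Let ψ : ℝⁿ → ℝ be C¹ with ∇ψ Lipschitz with constant 2M_ψ on conv C, let η > 0, and let x be a point of the sublevel set S := {z : ψ(z) ≤ 0} with ψ(x) = 0 and ‖∇ψ(x)‖ > 2η. Then for every y ∈ S, ⟨∇ψ(x)/‖∇ψ(x)‖, y − x⟩ ≤ (M_ψ/η)·‖y − x‖²; that is, the proximal normal inequality holds at x with constant η/(2M_ψ) for normal directions parallel to ∇ψ(x). -/
open Real

theorem stmt_13 {n : ℕ} (C : Set (EuclideanSpace ℝ (Fin n))) (hC : IsCompact C)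
    (Mψ η : ℝ) (hMψ : 0 < Mψ) (hη : 0 < η)
    (ψ : EuclideanSpace ℝ (Fin n) → ℝ)
    (g : EuclideanSpace ℝ (Fin n) → EuclideanSpace ℝ (Fin n))
    (hg : ∀ z, HasGradientAt ψ (g z) z)
    (hlip : ∀ a ∈ convexHull ℝ C, ∀ b ∈ convexHull ℝ C,
      ‖g a - g b‖ ≤ 2 * Mψ * ‖a - b‖)
    (hSC : {z : EuclideanSpace ℝ (Fin n) | ψ z ≤ 0} ⊆ C)
    (x : EuclideanSpace ℝ (Fin n)) (hx : ψ x = 0) (hgx : 2 * η < ‖g x‖) :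
    ∀ y, ψ y ≤ 0 →
      (inner ℝ ((‖g x‖)⁻¹ • g x) (y - x) : ℝ) ≤ (Mψ / η) * ‖y - x‖ ^ 2 := by
  intro y hy
  have hxC : x ∈ convexHull ℝ C := subset_convexHull ℝ C (hSC (by simp [hx]))
  have hyC : y ∈ convexHull ℝ C := subset_convexHull ℝ C (hSC hy)
  set s : Set (EuclideanSpace ℝ (Fin n)) := segment ℝ x y with hs
  have hsub : s ⊆ convexHull ℝ C :=
    (convex_convexHull ℝ C).segment_subset hxC hyC
  have hxs : x ∈ s := left_mem_segment ℝ x y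
  have hys : y ∈ s := right_mem_segment ℝ x y
  -- mean value inequality with reference linear map = derivative at x
  set φ : EuclideanSpace ℝ (Fin n) →L[ℝ] ℝ :=
    (InnerProductSpace.toDual ℝ (EuclideanSpace ℝ (Fin n))) (g x) with hφ
  have key : ‖ψ y - ψ x - φ (y - x)‖ ≤ (2 * Mψ * ‖y - x‖) * ‖y - x‖ := by
    apply Convex.norm_image_sub_le_of_norm_hasFDerivWithin_le' (s := s)
      (f' := fun z => (InnerProductSpace.toDual ℝ (EuclideanSpace ℝ (Fin n))) (g z))
    · intro z hz
      exact ((hg z).hasFDerivAt).hasFDerivWithinAt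
    · intro z hz
      have : ‖g z - g x‖ ≤ 2 * Mψ * ‖z - x‖ := hlip z (hsub hz) x hxC
      have hzx : ‖z - x‖ ≤ ‖y - x‖ := by
        rcases hz with ⟨a, b, ha, hb, hab, rfl⟩
        have : a • x + b • y - x = b • (y - x) := by
          have hx1 : a • x = x - b • x := by
            rw [eq_sub_iff_add_eq, ← add_smul]
            simp [hab]
          rw [hx1]
          module
        rw [this, norm_smul]
        simpa using mul_le_of_le_one_left (norm_nonneg _) (by simpa [abs_of_nonneg hb] using hab ▸ le_add_of_nonneg_left ha)
      calc ‖(InnerProductSpace.toDual ℝ (EuclideanSpace ℝ (Fin n))) (g z) - φ‖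
          = ‖g z - g x‖ := by rw [hφ, ← map_sub]; exact (InnerProductSpace.toDual ℝ _).norm_map _
        _ ≤ 2 * Mψ * ‖z - x‖ := this
        _ ≤ 2 * Mψ * ‖y - x‖ := by
            apply mul_le_mul_of_nonneg_left hzx; positivity
    · exact convex_segment x y
    · exact hxs
    · exact hys
  have hφval : φ (y - x) = (inner ℝ (g x) (y - x) : ℝ) := by
    simp [hφ, InnerProductSpace.toDual_apply_apply]
  have hinner : (inner ℝ (g x) (y - x) : ℝ) ≤ 2 * Mψ * ‖y - x‖ ^ 2 := by
    have h1 : -(ψ y - ψ x - φ (y - x)) ≤ 2 * Mψ * ‖y - x‖ ^ 2 := by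
      calc -(ψ y - ψ x - φ (y - x)) ≤ ‖ψ y - ψ x - φ (y - x)‖ := neg_le_abs _
        _ ≤ (2 * Mψ * ‖y - x‖) * ‖y - x‖ := key
        _ = 2 * Mψ * ‖y - x‖ ^ 2 := by ring
    have := h1
    rw [hφval] at this
    nlinarith [hy, hx.ge]
  have hgx0 : (0 : ℝ) < ‖g x‖ := lt_trans (by positivity) hgx
  rw [real_inner_smul_left]
  rw [inv_mul_le_iff₀ hgx0]
  have hr : (Mψ / η) * η = Mψ := div_mul_cancel₀ _ hη.ne'
  nlinarith [hinner, hgx, sq_nonneg (‖y - x‖), mul_nonneg (div_nonneg hMψ.le hη.le) (sq_nonneg ‖y - x‖)]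
end

section
/- Suppose ψ_1,…,ψ_r are C¹ with each ∇ψ_i Lipschitz with constant 2M_ψ on conv C, and let x be a point with ∑_{i=1}^r e^{γψ_i(x)} = 1 (i.e., ψ_γ(x) = 0) and ‖∇ψ_γ(x)‖ > 2η, where ψ_γ is the log-sum-exp approximation. Then for any ζ = λ·∑_i e^{γψ_i(x)}∇ψ_i(x) with λ > 0 and any y with ψ_γ(y) ≤ 0 (with x, y ∈ conv C), we have ⟨ζ/‖ζ‖, y − x⟩ ≤ (M_ψ/η)·‖y − x‖². -/
open Real

theorem stmt_14 {n r : ℕ} (hr : 1 ≤ r) (γ η Mψ : ℝ)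
    (hγ : 0 < γ) (hη : 0 < η) (hMψ : 0 < Mψ)
    (C : Set (EuclideanSpace ℝ (Fin n))) (hC : IsCompact C)
    (ψ : Fin r → EuclideanSpace ℝ (Fin n) → ℝ)
    (g : Fin r → EuclideanSpace ℝ (Fin n) → EuclideanSpace ℝ (Fin n))
    (hg : ∀ i z, HasGradientAt (ψ i) (g i z) z)
    (hlip : ∀ i, ∀ a ∈ convexHull ℝ C, ∀ b ∈ convexHull ℝ C,
      ‖g i a - g i b‖ ≤ 2 * Mψ * ‖a - b‖)
    (hsub : {z : EuclideanSpace ℝ (Fin n) |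
        (1 / γ) * Real.log (∑ i, Real.exp (γ * ψ i z)) ≤ 0} ⊆ C)
    (x : EuclideanSpace ℝ (Fin n)) (hxC : x ∈ convexHull ℝ C)
    (hx : ∑ i, Real.exp (γ * ψ i x) = 1)
    (hgx : 2 * η < ‖∑ i, Real.exp (γ * ψ i x) • g i x‖)
    (lam : ℝ) (hlam : 0 < lam) :
    ∀ y ∈ convexHull ℝ C,
      (1 / γ) * Real.log (∑ i, Real.exp (γ * ψ i y)) ≤ 0 →
      (inner ℝ ((‖lam • ∑ i, Real.exp (γ * ψ i x) • g i x‖)⁻¹ •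
          (lam • ∑ i, Real.exp (γ * ψ i x) • g i x)) (y - x) : ℝ)
        ≤ (Mψ / η) * ‖y - x‖ ^ 2 := by
  intro y hyC hy
  set G : EuclideanSpace ℝ (Fin n) := ∑ i, Real.exp (γ * ψ i x) • g i x with hG
  set v : EuclideanSpace ℝ (Fin n) := y - x with hv
  set w : Fin r → ℝ := fun i => Real.exp (γ * ψ i x) with hw
  -- Step A: descent-type bound per i
  have keyA : ∀ i : Fin r, ψ i x + inner ℝ (g i x) v - 2 * Mψ * ‖v‖ ^ 2 ≤ ψ i y := by
    intro i
    have hseg : segment ℝ x y ⊆ convexHull ℝ C :=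
      (convex_convexHull ℝ C).segment_subset hxC hyC
    have hbound : ∀ z ∈ segment ℝ x y,
        ‖(InnerProductSpace.toDual ℝ (EuclideanSpace ℝ (Fin n))) (g i z)
          - (InnerProductSpace.toDual ℝ (EuclideanSpace ℝ (Fin n))) (g i x)‖
          ≤ 2 * Mψ * ‖y - x‖ := by
      intro z hz
      rw [← map_sub, (InnerProductSpace.toDual ℝ (EuclideanSpace ℝ (Fin n))).norm_map]
      refine le_trans (hlip i z (hseg hz) x hxC) ?_
      have hzx : ‖z - x‖ ≤ ‖y - x‖ := by
        obtain ⟨a, b, ha, hb, hab, habz⟩ := hz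
        have : z - x = b • (y - x) := by
          rw [← habz]
          have : a = 1 - b := by linarith
          rw [this]
          module
        rw [this, norm_smul, Real.norm_eq_abs, abs_of_nonneg hb]
        nlinarith [norm_nonneg (y - x)]
      nlinarith
    have := Convex.norm_image_sub_le_of_norm_hasFDerivWithin_le'
      (f := ψ i)
      (f' := fun z => (InnerProductSpace.toDual ℝ (EuclideanSpace ℝ (Fin n))) (g i z))
      (φ := (InnerProductSpace.toDual ℝ (EuclideanSpace ℝ (Fin n))) (g i x))
      (C := 2 * Mψ * ‖y - x‖)
      (fun z _ => ((hg i z).hasFDerivAt).hasFDerivWithinAt)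
      hbound (convex_segment x y) (left_mem_segment ℝ x y) (right_mem_segment ℝ x y)
    rw [InnerProductSpace.toDual_apply_apply] at this
    have h1 : |ψ i y - ψ i x - inner ℝ (g i x) (y - x)| ≤ 2 * Mψ * ‖y - x‖ * ‖y - x‖ := this
    have h2 := (abs_le.mp h1).1
    have : (inner ℝ (g i x) v : ℝ) = inner ℝ (g i x) (y - x) := by rw [hv]
    rw [this]
    have hnv : ‖v‖ = ‖y - x‖ := by rw [hv]
    rw [hnv]
    nlinarith
  -- Step B: sum at y is ≤ 1
  have hSpos : 0 < ∑ i, Real.exp (γ * ψ i y) := by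
    have : (Finset.univ : Finset (Fin r)).Nonempty := by
      have : Nonempty (Fin r) := Fin.pos_iff_nonempty.mp hr
      exact Finset.univ_nonempty
    exact Finset.sum_pos (fun i _ => Real.exp_pos _) this
  have hS1 : ∑ i, Real.exp (γ * ψ i y) ≤ 1 := by
    have hlog : Real.log (∑ i, Real.exp (γ * ψ i y)) ≤ 0 := by
      by_contra h
      push_neg at h
      have : 0 < (1 / γ) * Real.log (∑ i, Real.exp (γ * ψ i y)) :=
        mul_pos (by positivity) h
      linarith
    exact (Real.log_nonpos_iff hSpos.le).mp hlog
  -- Step C: weighted sum of exps ≤ 1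
  have keyC : ∑ i, w i * Real.exp (γ * (inner ℝ (g i x) v - 2 * Mψ * ‖v‖ ^ 2)) ≤ 1 := by
    refine le_trans (le_trans (Finset.sum_le_sum ?_) le_rfl) hS1
    intro i _
    rw [hw, ← Real.exp_add]
    apply Real.exp_le_exp.mpr
    have := keyA i
    nlinarith
  -- Step D: Jensen
  have hw0 : ∀ i ∈ Finset.univ, (0:ℝ) ≤ w i := fun i _ => (Real.exp_pos _).le
  have hw1 : ∑ i, w i = 1 := hx
  have jensen := convexOn_exp.map_sum_le (t := Finset.univ)
    (w := w) (p := fun i => γ * (inner ℝ (g i x) v - 2 * Mψ * ‖v‖ ^ 2))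
    hw0 hw1 (fun i _ => Set.mem_univ _)
  have hsum_eq : ∑ i, w i • (γ * ((inner ℝ (g i x) v : ℝ) - 2 * Mψ * ‖v‖ ^ 2))
      = γ * ((inner ℝ G v : ℝ) - 2 * Mψ * ‖v‖ ^ 2) := by
    have hGv : (inner ℝ G v : ℝ) = ∑ i, w i * inner ℝ (g i x) v := by
      rw [hG, sum_inner]
      exact Finset.sum_congr rfl fun i _ => real_inner_smul_left _ _ _
    rw [hGv]
    calc ∑ i, w i • (γ * ((inner ℝ (g i x) v : ℝ) - 2 * Mψ * ‖v‖ ^ 2))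
        = ∑ i, (γ * (w i * inner ℝ (g i x) v) - γ * (2 * Mψ * ‖v‖ ^ 2) * w i) := by
          refine Finset.sum_congr rfl fun i _ => ?_
          simp only [smul_eq_mul]; ring
      _ = γ * (∑ i, w i * (inner ℝ (g i x) v : ℝ)) - γ * (2 * Mψ * ‖v‖ ^ 2) * ∑ i, w i := by
          rw [Finset.sum_sub_distrib, ← Finset.mul_sum, ← Finset.mul_sum]
      _ = γ * ((∑ i, w i * (inner ℝ (g i x) v : ℝ)) - 2 * Mψ * ‖v‖ ^ 2) := by
          rw [hw1]; ring
  rw [hsum_eq] at jensen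
  have hexp_le : Real.exp (γ * ((inner ℝ G v : ℝ) - 2 * Mψ * ‖v‖ ^ 2)) ≤ 1 := by
    refine le_trans jensen ?_
    refine le_trans (le_of_eq ?_) keyC
    rfl
  have hGvle : (inner ℝ G v : ℝ) ≤ 2 * Mψ * ‖v‖ ^ 2 := by
    have := Real.exp_le_one_iff.mp hexp_le
    nlinarith
  -- Final computation
  have hnormG : 0 < ‖G‖ := lt_trans (by positivity) hgx
  have hlhs : (inner ℝ ((‖lam • G‖)⁻¹ • (lam • G)) v : ℝ) = ‖G‖⁻¹ * inner ℝ G v := by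
    rw [real_inner_smul_left, real_inner_smul_left, norm_smul, Real.norm_eq_abs,
      abs_of_pos hlam, mul_inv]
    field_simp
  rw [hlhs]
  rcases le_or_gt (inner ℝ G v : ℝ) 0 with hneg | hpos
  · have : ‖G‖⁻¹ * (inner ℝ G v : ℝ) ≤ 0 :=
      mul_nonpos_of_nonneg_of_nonpos (by positivity) hneg
    have hrhs : 0 ≤ (Mψ / η) * ‖y - x‖ ^ 2 := by positivity
    linarith
  · have h1 : ‖G‖⁻¹ ≤ (2 * η)⁻¹ := by
      apply inv_anti₀ (by positivity) hgx.le
    have h2 : ‖G‖⁻¹ * (inner ℝ G v : ℝ) ≤ (2 * η)⁻¹ * (inner ℝ G v : ℝ) :=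
      mul_le_mul_of_nonneg_right h1 hpos.le
    have h3 : (2 * η)⁻¹ * (inner ℝ G v : ℝ) ≤ (2 * η)⁻¹ * (2 * Mψ * ‖v‖ ^ 2) :=
      mul_le_mul_of_nonneg_left hGvle (by positivity)
    have h4 : (2 * η)⁻¹ * (2 * Mψ * ‖v‖ ^ 2) = (Mψ / η) * ‖v‖ ^ 2 := by
      field_simp
    have hnv : ‖v‖ = ‖y - x‖ := by rw [hv]
    rw [hnv] at h4
    linarith
end
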